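/- The metric d₁ is compatible with the weak topology on probability measures on ℝ: (i) if μ is a finite nonnegative Borel measure on ℝ and (μⁿ) are probability measures with d₁(μⁿ,μ) → 0, then μⁿ converges weakly to μ and μ is a probability measure; (ii) conversely, if probability measures μₙ converge weakly to a probability measure μ, then d₁(μₙ,μ) → 0; (iii) moreover, any sequence of probability measures on ℝ that is Cauchy for d₁ converges weakly to some probability measure. -/

import Mathlib

open MeasureTheory Filter Topology
open scoped ENNReal NNReal BoundedContinuousFunction

noncomputable section

/-- `f` is Lipschitz-plus-sup-norm bounded by one:
`sup_{x≠y} |f x − f y|/|x−y| + sup_x |f x| ≤ 1`, expressed by a decomposition of the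
bound `1 = K + M` into a Lipschitz constant `K` and a uniform bound `M`. -/
def LipNormLEOne (f : ℝ → ℝ) : Prop :=
  ∃ K M : ℝ, 0 ≤ K ∧ 0 ≤ M ∧ K + M ≤ 1 ∧
    LipschitzWith K.toNNReal f ∧ ∀ t : ℝ, |f t| ≤ M

/-- The modified Dudley distance `d₁`: the supremum of `|∫ f dμ − ∫ f dν|` over
non-decreasing Lipschitz functions `f` with `‖f‖_L ≤ 1`. -/
def d1 (μ ν : Measure ℝ) : ℝ :=
  sSup {r : ℝ | ∃ f : ℝ → ℝ, Monotone f ∧ LipNormLEOne f ∧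
    r = |(∫ t, f t ∂μ) - ∫ t, f t ∂ν|}

section D1AuxSection
open Set

namespace D1Aux

/-- real-valued CDF -/
def Fc (ν : Measure ℝ) (x : ℝ) : ℝ := (ν (Set.Iic x)).toReal

lemma Fc_mono (ν : Measure ℝ) [IsFiniteMeasure ν] : Monotone (Fc ν) := fun a b hab =>
  ENNReal.toReal_mono (measure_ne_top _ _) (measure_mono (Iic_subset_Iic.2 hab))

lemma Fc_nonneg (ν : Measure ℝ) (x : ℝ) : 0 ≤ Fc ν x := ENNReal.toReal_nonneg

lemma Fc_le_one (ν : Measure ℝ) [IsProbabilityMeasure ν] (x : ℝ) : Fc ν x ≤ 1 := by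
  have h : ν (Set.Iic x) ≤ 1 := prob_le_one
  have := ENNReal.toReal_mono ENNReal.one_ne_top h
  simpa [Fc] using this

lemma meas_Ioc (ν : Measure ℝ) [IsFiniteMeasure ν] {a b : ℝ} (hab : a ≤ b) :
    (ν (Set.Ioc a b)).toReal = Fc ν b - Fc ν a := by
  have hsub : Set.Iic a ⊆ Set.Iic b := Iic_subset_Iic.2 hab
  have h := measure_diff hsub measurableSet_Iic.nullMeasurableSet (measure_ne_top ν _)
  rw [Set.Iic_sdiff_Iic] at h
  rw [h, ENNReal.toReal_sub_of_le (measure_mono hsub) (measure_ne_top _ _)]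
  rfl

lemma meas_Ioi (ν : Measure ℝ) [IsProbabilityMeasure ν] (x : ℝ) :
    (ν (Set.Ioi x)).toReal = 1 - Fc ν x := by
  rw [← Set.compl_Iic, prob_compl_eq_one_sub measurableSet_Iic,
    ENNReal.toReal_sub_of_le prob_le_one ENNReal.one_ne_top, ENNReal.toReal_one]
  rfl

lemma integrable_of_bdd {ν : Measure ℝ} [IsFiniteMeasure ν] {h : ℝ → ℝ} (hc : Continuous h)
    {C : ℝ} (hC : ∀ t, |h t| ≤ C) : Integrable h ν :=
  (integrable_const C).mono' hc.aestronglyMeasurable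
    (ae_of_all _ fun t => by simpa [Real.norm_eq_abs] using hC t)

lemma integral_decomp (ν : Measure ℝ) [IsFiniteMeasure ν] {h : ℝ → ℝ} (hint : Integrable h ν)
    (y : ℕ → ℝ) (m : ℕ) (hy : ∀ i < m, y i ≤ y (i+1)) :
    ∫ t, h t ∂ν = (∫ t in Set.Iic (y 0), h t ∂ν)
      + (∑ i ∈ Finset.range m, ∫ t in Set.Ioc (y i) (y (i+1)), h t ∂ν)
      + ∫ t in Set.Ioi (y m), h t ∂ν := by
  induction m with
  | zero =>
    simp only [Finset.range_zero, Finset.sum_empty, add_zero]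
    rw [← Set.compl_Iic, ← integral_add_compl measurableSet_Iic hint]
  | succ m ih =>
    have h1 : ∫ t in Set.Ioi (y m), h t ∂ν
        = (∫ t in Set.Ioc (y m) (y (m+1)), h t ∂ν) + ∫ t in Set.Ioi (y (m+1)), h t ∂ν := by
      rw [← setIntegral_union (Set.Ioc_disjoint_Ioi le_rfl) measurableSet_Ioi
            hint.integrableOn hint.integrableOn,
        Set.Ioc_union_Ioi_eq_Ioi (hy m (Nat.lt_succ_self m))]
    rw [ih (fun i hi => hy i (hi.trans (Nat.lt_succ_self m))), h1, Finset.sum_range_succ]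
    ring

end D1Aux

namespace D1Aux

lemma abs_setIntegral_le {ν : Measure ℝ} [IsFiniteMeasure ν] {h : ℝ → ℝ} {s : Set ℝ}
    {C : ℝ} (hC : ∀ t ∈ s, |h t| ≤ C) (hint : Integrable h ν) :
    |∫ t in s, h t ∂ν| ≤ C * (ν s).toReal := by
  have := norm_setIntegral_le_of_norm_le_const (μ := ν) (s := s) (f := h) (C := C)
    (measure_lt_top ν s) (fun x hx => by simpa [Real.norm_eq_abs] using hC x hx)
  simpa [Real.norm_eq_abs, measureReal_def] using this

lemma grid_estimate (μ ν : Measure ℝ) [IsProbabilityMeasure μ] [IsProbabilityMeasure ν]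
    {h : ℝ → ℝ} (hc : Continuous h) {C : ℝ} (hC0 : 0 ≤ C) (hhC : ∀ t, |h t| ≤ C)
    {η : ℝ} (hη : 0 ≤ η) {m : ℕ} {y : ℕ → ℝ} (hy : ∀ i < m, y i ≤ y (i+1))
    (hosc : ∀ i < m, ∀ x ∈ Set.Ioc (y i) (y (i+1)), |h x - h (y (i+1))| ≤ η) :
    |(∫ t, h t ∂ν) - ∫ t, h t ∂μ| ≤
      C * (Fc ν (y 0) + Fc μ (y 0) + (1 - Fc ν (y m)) + (1 - Fc μ (y m)))
      + 2 * η + 2 * C * ∑ i ∈ Finset.range (m+1), |Fc ν (y i) - Fc μ (y i)| := by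
  have hiν : Integrable h ν := integrable_of_bdd hc hhC
  have hiμ : Integrable h μ := integrable_of_bdd hc hhC
  -- single-interval estimate
  have key : ∀ (ρ : Measure ℝ), IsProbabilityMeasure ρ → Integrable h ρ → ∀ i < m,
      |(∫ t in Set.Ioc (y i) (y (i+1)), h t ∂ρ)
        - h (y (i+1)) * (Fc ρ (y (i+1)) - Fc ρ (y i))|
      ≤ η * (Fc ρ (y (i+1)) - Fc ρ (y i)) := by
    intro ρ hρ hint i hi
    have hmeas : (ρ (Set.Ioc (y i) (y (i+1)))).toReal = Fc ρ (y (i+1)) - Fc ρ (y i) :=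
      meas_Ioc ρ (hy i hi)
    have e1 : (∫ t in Set.Ioc (y i) (y (i+1)), h t ∂ρ)
        - h (y (i+1)) * (Fc ρ (y (i+1)) - Fc ρ (y i))
        = ∫ t in Set.Ioc (y i) (y (i+1)), (h t - h (y (i+1))) ∂ρ := by
      rw [integral_sub hint.integrableOn
        (integrableOn_const (measure_ne_top ρ _)), setIntegral_const,
        smul_eq_mul, measureReal_def, hmeas, mul_comm]
    rw [e1, ← hmeas]
    exact abs_setIntegral_le (fun t ht => hosc i hi t ht) (hint.sub (integrable_const _))
  set G : ℕ → ℝ := fun i => |Fc ν (y i) - Fc μ (y i)| with hG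
  set Aν := ∫ t in Set.Iic (y 0), h t ∂ν with hAν
  set Aμ := ∫ t in Set.Iic (y 0), h t ∂μ with hAμ
  set Bν := ∫ t in Set.Ioi (y m), h t ∂ν with hBν
  set Bμ := ∫ t in Set.Ioi (y m), h t ∂μ with hBμ
  set Sν := ∑ i ∈ Finset.range m, ∫ t in Set.Ioc (y i) (y (i+1)), h t ∂ν with hSν
  set Sμ := ∑ i ∈ Finset.range m, ∫ t in Set.Ioc (y i) (y (i+1)), h t ∂μ with hSμ
  set Tν := ∑ i ∈ Finset.range m, h (y (i+1)) * (Fc ν (y (i+1)) - Fc ν (y i)) with hTν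
  set Tμ := ∑ i ∈ Finset.range m, h (y (i+1)) * (Fc μ (y (i+1)) - Fc μ (y i)) with hTμ
  have htel : ∀ (ρ : Measure ℝ),
      ∑ i ∈ Finset.range m, (Fc ρ (y (i+1)) - Fc ρ (y i)) = Fc ρ (y m) - Fc ρ (y 0) :=
    fun ρ => Finset.sum_range_sub (fun i => Fc ρ (y i)) m
  have hST : ∀ (ρ : Measure ℝ), IsProbabilityMeasure ρ → Integrable h ρ →
      |(∑ i ∈ Finset.range m, ∫ t in Set.Ioc (y i) (y (i+1)), h t ∂ρ)
        - ∑ i ∈ Finset.range m, h (y (i+1)) * (Fc ρ (y (i+1)) - Fc ρ (y i))| ≤ η := by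
    intro ρ hρ hint
    rw [← Finset.sum_sub_distrib]
    refine (Finset.abs_sum_le_sum_abs _ _).trans ?_
    refine le_trans (Finset.sum_le_sum
      (fun i hi => key ρ hρ hint i (Finset.mem_range.1 hi))) ?_
    rw [← Finset.mul_sum, htel ρ]
    have h1 : Fc ρ (y m) - Fc ρ (y 0) ≤ 1 := by
      have := Fc_le_one ρ (y m); have := Fc_nonneg ρ (y 0); linarith
    nlinarith
  have hSTν := hST ν inferInstance hiν
  have hSTμ := hST μ inferInstance hiμ
  have hTT : |Tν - Tμ| ≤ 2 * C * ∑ i ∈ Finset.range (m+1), G i := by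
    rw [hTν, hTμ, ← Finset.sum_sub_distrib]
    refine (Finset.abs_sum_le_sum_abs _ _).trans ?_
    have hterm : ∀ i ∈ Finset.range m,
        |h (y (i+1)) * (Fc ν (y (i+1)) - Fc ν (y i))
          - h (y (i+1)) * (Fc μ (y (i+1)) - Fc μ (y i))|
        ≤ C * (G (i+1) + G i) := by
      intro i _
      rw [← mul_sub, abs_mul]
      have e0 : Fc ν (y (i+1)) - Fc ν (y i) - (Fc μ (y (i+1)) - Fc μ (y i))
          = (Fc ν (y (i+1)) - Fc μ (y (i+1))) - (Fc ν (y i) - Fc μ (y i)) := by ring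
      have h1 : |Fc ν (y (i+1)) - Fc ν (y i) - (Fc μ (y (i+1)) - Fc μ (y i))|
          ≤ G (i+1) + G i := by
        rw [e0]; exact abs_sub _ _
      exact mul_le_mul (hhC _) h1 (abs_nonneg _) hC0
    refine (Finset.sum_le_sum hterm).trans ?_
    rw [← Finset.mul_sum]
    have e2 : ∑ i ∈ Finset.range m, (G (i+1) + G i)
        = (∑ i ∈ Finset.range m, G (i+1)) + ∑ i ∈ Finset.range m, G i :=
      Finset.sum_add_distrib
    have e3 : ∑ i ∈ Finset.range m, G (i+1) ≤ ∑ i ∈ Finset.range (m+1), G i := by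
      rw [Finset.sum_range_succ']
      exact le_add_of_nonneg_right (abs_nonneg _)
    have e4 : ∑ i ∈ Finset.range m, G i ≤ ∑ i ∈ Finset.range (m+1), G i :=
      Finset.sum_le_sum_of_subset_of_nonneg (Finset.range_subset_range.2 (Nat.le_succ m))
        (fun i _ _ => abs_nonneg _)
    nlinarith
  have hAν' : |Aν| ≤ C * Fc ν (y 0) := abs_setIntegral_le (fun t _ => hhC t) hiν
  have hAμ' : |Aμ| ≤ C * Fc μ (y 0) := abs_setIntegral_le (fun t _ => hhC t) hiμ
  have hBν' : |Bν| ≤ C * (1 - Fc ν (y m)) := by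
    have := abs_setIntegral_le (ν := ν) (s := Set.Ioi (y m)) (fun t _ => hhC t) hiν
    rwa [meas_Ioi] at this
  have hBμ' : |Bμ| ≤ C * (1 - Fc μ (y m)) := by
    have := abs_setIntegral_le (ν := μ) (s := Set.Ioi (y m)) (fun t _ => hhC t) hiμ
    rwa [meas_Ioi] at this
  rw [integral_decomp ν hiν y m hy, integral_decomp μ hiμ y m hy]
  have edec : Aν + Sν + Bν - (Aμ + Sμ + Bμ)
      = (Aν - Aμ) + ((Sν - Tν) + (Tν - Tμ) + (Tμ - Sμ)) + (Bν - Bμ) := by ring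
  rw [edec]
  have t1 : |(Aν - Aμ) + ((Sν - Tν) + (Tν - Tμ) + (Tμ - Sμ)) + (Bν - Bμ)|
      ≤ |Aν| + |Aμ| + (|Sν - Tν| + |Tν - Tμ| + |Tμ - Sμ|) + (|Bν| + |Bμ|) := by
    calc |(Aν - Aμ) + ((Sν - Tν) + (Tν - Tμ) + (Tμ - Sμ)) + (Bν - Bμ)|
        ≤ |(Aν - Aμ) + ((Sν - Tν) + (Tν - Tμ) + (Tμ - Sμ))| + |Bν - Bμ| := abs_add_le _ _
      _ ≤ |Aν - Aμ| + |(Sν - Tν) + (Tν - Tμ) + (Tμ - Sμ)| + |Bν - Bμ| := by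
          have := abs_add_le (Aν - Aμ) ((Sν - Tν) + (Tν - Tμ) + (Tμ - Sμ)); linarith
      _ ≤ (|Aν| + |Aμ|) + (|Sν - Tν| + |Tν - Tμ| + |Tμ - Sμ|) + (|Bν| + |Bμ|) := by
          have g1 := abs_sub Aν Aμ
          have g2 := abs_sub Bν Bμ
          have g3 := abs_add_le ((Sν - Tν) + (Tν - Tμ)) (Tμ - Sμ)
          have g4 := abs_add_le (Sν - Tν) (Tν - Tμ)
          linarith
      _ = |Aν| + |Aμ| + (|Sν - Tν| + |Tν - Tμ| + |Tμ - Sμ|) + (|Bν| + |Bμ|) := by ring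
  refine t1.trans ?_
  have hTSμ : |Tμ - Sμ| ≤ η := by rw [abs_sub_comm]; exact hSTμ
  linarith

end D1Aux

namespace D1Aux

lemma lip_bound {f : ℝ → ℝ} (h : LipNormLEOne f) : ∀ t, |f t| ≤ 1 := by
  obtain ⟨K, M, hK, hM, hKM, _, hb⟩ := h
  exact fun t => (hb t).trans (by linarith)

lemma lip_continuous {f : ℝ → ℝ} (h : LipNormLEOne f) : Continuous f := by
  obtain ⟨K, M, _, _, _, hl, _⟩ := h
  exact hl.continuous

lemma bddAbove_d1set (μ ν : Measure ℝ) [IsFiniteMeasure μ] [IsFiniteMeasure ν] :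
    BddAbove {r : ℝ | ∃ f : ℝ → ℝ, Monotone f ∧ LipNormLEOne f ∧
      r = |(∫ t, f t ∂μ) - ∫ t, f t ∂ν|} := by
  refine ⟨(μ Set.univ).toReal + (ν Set.univ).toReal, ?_⟩
  rintro r ⟨f, _, hl, rfl⟩
  have hiμ : Integrable f μ := integrable_of_bdd (lip_continuous hl) (lip_bound hl)
  have hiν : Integrable f ν := integrable_of_bdd (lip_continuous hl) (lip_bound hl)
  have h1 : |∫ t, f t ∂μ| ≤ 1 * (μ Set.univ).toReal := by
    have := abs_setIntegral_le (ν := μ) (s := Set.univ) (fun t _ => lip_bound hl t) hiμ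
    rwa [setIntegral_univ] at this
  have h2 : |∫ t, f t ∂ν| ≤ 1 * (ν Set.univ).toReal := by
    have := abs_setIntegral_le (ν := ν) (s := Set.univ) (fun t _ => lip_bound hl t) hiν
    rwa [setIntegral_univ] at this
  have := abs_sub (∫ t, f t ∂μ) (∫ t, f t ∂ν)
  linarith

lemma abs_le_d1 {μ ν : Measure ℝ} [IsFiniteMeasure μ] [IsFiniteMeasure ν] {f : ℝ → ℝ}
    (hf : Monotone f) (hl : LipNormLEOne f) :
    |(∫ t, f t ∂μ) - ∫ t, f t ∂ν| ≤ d1 μ ν :=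
  le_csSup (bddAbove_d1set μ ν) ⟨f, hf, hl, rfl⟩

lemma lipNormLEOne_zero : LipNormLEOne (fun _ : ℝ => (0:ℝ)) :=
  ⟨0, 0, le_rfl, le_rfl, by norm_num, by simpa using (LipschitzWith.const (0:ℝ)), fun t => by simp⟩

lemma lipNormLEOne_one : LipNormLEOne (fun _ : ℝ => (1:ℝ)) :=
  ⟨0, 1, le_rfl, zero_le_one, by norm_num, by simpa using (LipschitzWith.const (1:ℝ)),
    fun t => by simp⟩

lemma d1_nonneg (μ ν : Measure ℝ) [IsFiniteMeasure μ] [IsFiniteMeasure ν] : 0 ≤ d1 μ ν := by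
  have := abs_le_d1 (μ := μ) (ν := ν) monotone_const lipNormLEOne_zero
  simpa using this

lemma d1_comm (μ ν : Measure ℝ) : d1 μ ν = d1 ν μ := by
  unfold d1
  congr 1
  ext r
  constructor
  · rintro ⟨f, hf, hl, rfl⟩; exact ⟨f, hf, hl, by rw [abs_sub_comm]⟩
  · rintro ⟨f, hf, hl, rfl⟩; exact ⟨f, hf, hl, by rw [abs_sub_comm]⟩

/-! ### ramp functions -/

def ramp (a δ : ℝ) (t : ℝ) : ℝ := (δ/(1+δ)) * max 0 (min 1 ((t - a)/δ))

lemma ramp_mono {a δ : ℝ} (hδ : 0 < δ) : Monotone (ramp a δ) := by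
  have h1 : Monotone fun t : ℝ => (t - a)/δ :=
    fun x y hxy => (div_le_div_iff_of_pos_right hδ).2 (by linarith)
  have h2 : Monotone fun t : ℝ => max 0 (min 1 ((t - a)/δ)) :=
    fun x y hxy => max_le_max le_rfl (min_le_min le_rfl (h1 hxy))
  exact fun x y hxy => mul_le_mul_of_nonneg_left (h2 hxy)
    (div_nonneg hδ.le (by linarith))

lemma ramp_nonneg {a δ : ℝ} (hδ : 0 < δ) (t : ℝ) : 0 ≤ ramp a δ t :=
  mul_nonneg (div_nonneg hδ.le (by linarith)) (le_max_left _ _)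

lemma ramp_le {a δ : ℝ} (hδ : 0 < δ) (t : ℝ) : ramp a δ t ≤ δ/(1+δ) := by
  have : max 0 (min 1 ((t - a)/δ)) ≤ 1 := max_le zero_le_one (min_le_left _ _)
  calc ramp a δ t ≤ (δ/(1+δ)) * 1 :=
        mul_le_mul_of_nonneg_left this (div_nonneg hδ.le (by linarith))
    _ = δ/(1+δ) := mul_one _

lemma ramp_eq_zero {a δ : ℝ} (hδ : 0 < δ) {t : ℝ} (ht : t ≤ a) : ramp a δ t = 0 := by
  have h1 : (t - a)/δ ≤ 0 := div_nonpos_of_nonpos_of_nonneg (by linarith) hδ.le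
  have : min 1 ((t - a)/δ) ≤ 0 := le_trans (min_le_right _ _) h1
  rw [ramp, max_eq_left this, mul_zero]

lemma ramp_eq_c {a δ : ℝ} (hδ : 0 < δ) {t : ℝ} (ht : a + δ ≤ t) : ramp a δ t = δ/(1+δ) := by
  have h1 : (1:ℝ) ≤ (t - a)/δ := (one_le_div hδ).2 (by linarith)
  rw [ramp, min_eq_left h1, max_eq_right zero_le_one, mul_one]

lemma ramp_lipschitz {a δ : ℝ} (hδ : 0 < δ) :
    LipschitzWith (Real.toNNReal (1/(1+δ))) (ramp a δ) := by
  have h1δ : (0:ℝ) < 1 + δ := by linarith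
  apply LipschitzWith.of_dist_le_mul
  intro x y
  rw [Real.dist_eq, Real.dist_eq, Real.coe_toNNReal _ (by positivity)]
  have key : |ramp a δ x - ramp a δ y| ≤ (δ/(1+δ)) * |(x - y)/δ| := by
    rw [ramp, ramp, ← mul_sub, abs_mul, abs_of_nonneg (by positivity :
      (0:ℝ) ≤ δ/(1+δ))]
    apply mul_le_mul_of_nonneg_left _ (by positivity : (0:ℝ) ≤ δ/(1+δ))
    calc |max 0 (min 1 ((x - a)/δ)) - max 0 (min 1 ((y - a)/δ))|
        = |max (min 1 ((x - a)/δ)) 0 - max (min 1 ((y - a)/δ)) 0| := by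
          rw [max_comm 0, max_comm 0]
      _ ≤ |min 1 ((x - a)/δ) - min 1 ((y - a)/δ)| := abs_max_sub_max_le_abs _ _ _
      _ ≤ max |(1:ℝ) - 1| |(x - a)/δ - (y - a)/δ| := abs_min_sub_min_le_max _ _ _ _
      _ = |(x - y)/δ| := by
          rw [sub_self, abs_zero, max_eq_right (abs_nonneg _)]
          congr 1; ring
  refine key.trans (le_of_eq ?_)
  rw [abs_div, abs_of_pos hδ]
  field_simp

lemma ramp_lipnorm {a δ : ℝ} (hδ : 0 < δ) : LipNormLEOne (ramp a δ) := by
  refine ⟨1/(1+δ), δ/(1+δ), by positivity, by positivity, le_of_eq ?_, ramp_lipschitz hδ,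
    fun t => ?_⟩
  · field_simp
  · rw [abs_of_nonneg (ramp_nonneg hδ t)]; exact ramp_le hδ t

lemma ramp_integral_bounds (ν : Measure ℝ) [IsProbabilityMeasure ν] {a δ : ℝ} (hδ : 0 < δ) :
    (δ/(1+δ)) * (1 - Fc ν (a+δ)) ≤ ∫ t, ramp a δ t ∂ν ∧
    ∫ t, ramp a δ t ∂ν ≤ (δ/(1+δ)) * (1 - Fc ν a) := by
  have hc0 : (0:ℝ) ≤ δ/(1+δ) := by positivity
  have hcont : Continuous (ramp a δ) := (ramp_lipschitz hδ).continuous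
  have hint : Integrable (ramp a δ) ν := integrable_of_bdd hcont
    (fun t => by rw [abs_of_nonneg (ramp_nonneg hδ t)]; exact ramp_le hδ t)
  have hind1 : Integrable ((Set.Ioi (a+δ)).indicator fun _ => δ/(1+δ)) ν := by
    rw [integrable_indicator_iff measurableSet_Ioi]
    exact integrableOn_const (measure_ne_top _ _)
  have hind2 : Integrable ((Set.Ioi a).indicator fun _ => δ/(1+δ)) ν := by
    rw [integrable_indicator_iff measurableSet_Ioi]
    exact integrableOn_const (measure_ne_top _ _)
  constructor
  · have hle : ∀ t, (Set.Ioi (a+δ)).indicator (fun _ => δ/(1+δ)) t ≤ ramp a δ t := by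
      intro t
      by_cases ht : t ∈ Set.Ioi (a+δ)
      · rw [Set.indicator_of_mem ht, ramp_eq_c hδ (le_of_lt ht)]
      · rw [Set.indicator_of_notMem ht]; exact ramp_nonneg hδ t
    have := integral_mono hind1 hint hle
    rwa [integral_indicator_const _ measurableSet_Ioi, smul_eq_mul, measureReal_def, meas_Ioi, mul_comm] at this
  · have hle : ∀ t, ramp a δ t ≤ (Set.Ioi a).indicator (fun _ => δ/(1+δ)) t := by
      intro t
      by_cases ht : t ∈ Set.Ioi a
      · rw [Set.indicator_of_mem ht]; exact ramp_le hδ t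
      · rw [Set.indicator_of_notMem ht, ramp_eq_zero hδ (not_lt.1 ht)]
    have := integral_mono hint hind2 hle
    rwa [integral_indicator_const _ measurableSet_Ioi, smul_eq_mul, measureReal_def, meas_Ioi, mul_comm] at this

lemma Fc_le_of_d1 (μ ν : Measure ℝ) [IsProbabilityMeasure μ] [IsProbabilityMeasure ν]
    {a δ : ℝ} (hδ : 0 < δ) :
    Fc μ a ≤ Fc ν (a + δ) + ((1+δ)/δ) * d1 μ ν := by
  have hc : (0:ℝ) < δ/(1+δ) := by positivity
  have h1 := (ramp_integral_bounds ν (a := a) hδ).1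
  have h2 := (ramp_integral_bounds μ (a := a) hδ).2
  have h3 : |(∫ t, ramp a δ t ∂μ) - ∫ t, ramp a δ t ∂ν| ≤ d1 μ ν :=
    abs_le_d1 (ramp_mono hδ) (ramp_lipnorm hδ)
  have h4 : ∫ t, ramp a δ t ∂ν - ∫ t, ramp a δ t ∂μ ≤ d1 μ ν := by
    have := (abs_le.mp h3).1
    linarith
  have h5 : (δ/(1+δ)) * (1 - Fc ν (a+δ)) ≤ (δ/(1+δ)) * (1 - Fc μ a) + d1 μ ν := by linarith
  have h6 : ((1+δ)/δ) * (δ/(1+δ)) = 1 := by field_simp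
  have hpos : (0:ℝ) < (1+δ)/δ := by positivity
  have h7 : 1 - Fc ν (a+δ) ≤ (1 - Fc μ a) + ((1+δ)/δ) * d1 μ ν := by
    have hmul := mul_le_mul_of_nonneg_left h5 hpos.le
    calc 1 - Fc ν (a+δ) = ((1+δ)/δ) * ((δ/(1+δ)) * (1 - Fc ν (a+δ))) := by
          rw [← mul_assoc, h6, one_mul]
      _ ≤ ((1+δ)/δ) * ((δ/(1+δ)) * (1 - Fc μ a) + d1 μ ν) := hmul
      _ = (1 - Fc μ a) + ((1+δ)/δ) * d1 μ ν := by rw [mul_add, ← mul_assoc, h6, one_mul]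
  linarith

end D1Aux

namespace D1Aux

lemma tendsto_Fc_right (μ : Measure ℝ) [IsFiniteMeasure μ] (x : ℝ) :
    Tendsto (fun n : ℕ => Fc μ (x + 1/(n+1))) atTop (𝓝 (Fc μ x)) := by
  have hset : ⋂ n : ℕ, Set.Iic (x + 1/((n:ℝ)+1)) = Set.Iic x := by
    ext z; simp only [Set.mem_iInter, Set.mem_Iic]
    constructor
    · intro h
      by_contra hz
      push_neg at hz
      obtain ⟨n, hn⟩ := exists_nat_one_div_lt (by linarith : (0:ℝ) < z - x)
      have := h n; linarith
    · intro h n; have : (0:ℝ) < 1/((n:ℝ)+1) := by positivity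
      linarith
  have hmono : Antitone fun n : ℕ => Set.Iic (x + 1/((n:ℝ)+1)) := by
    intro p q hpq
    apply Set.Iic_subset_Iic.2
    have h1 : 1/((q:ℝ)+1) ≤ 1/((p:ℝ)+1) := by
      apply one_div_le_one_div_of_le (by positivity)
      have : (p:ℝ) ≤ q := Nat.cast_le.2 hpq
      linarith
    linarith
  have ht := tendsto_measure_iInter_atTop (μ := μ)
    (fun n => measurableSet_Iic.nullMeasurableSet) hmono ⟨0, measure_ne_top _ _⟩
  rw [hset] at ht
  exact (ENNReal.tendsto_toReal (measure_ne_top μ _)).comp ht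

lemma tendsto_Fc_left (μ : Measure ℝ) [IsFiniteMeasure μ] {x : ℝ} (hx : μ {x} = 0) :
    Tendsto (fun n : ℕ => Fc μ (x - 1/(n+1))) atTop (𝓝 (Fc μ x)) := by
  have hset : ⋃ n : ℕ, Set.Iic (x - 1/((n:ℝ)+1)) = Set.Iio x := by
    ext z; simp only [Set.mem_iUnion, Set.mem_Iic, Set.mem_Iio]
    constructor
    · rintro ⟨n, hn⟩
      have : (0:ℝ) < 1/((n:ℝ)+1) := by positivity
      linarith
    · intro h
      obtain ⟨n, hn⟩ := exists_nat_one_div_lt (by linarith : (0:ℝ) < x - z)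
      exact ⟨n, by linarith⟩
  have hmono : Monotone fun n : ℕ => Set.Iic (x - 1/((n:ℝ)+1)) := by
    intro p q hpq
    apply Set.Iic_subset_Iic.2
    have h1 : 1/((q:ℝ)+1) ≤ 1/((p:ℝ)+1) := by
      apply one_div_le_one_div_of_le (by positivity)
      have : (p:ℝ) ≤ q := Nat.cast_le.2 hpq
      linarith
    linarith
  have ht := tendsto_measure_iUnion_atTop (μ := μ) hmono
  rw [hset] at ht
  have heq : μ (Set.Iio x) = μ (Set.Iic x) := measure_congr (Iio_ae_eq_Iic' hx)
  rw [heq] at ht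
  exact (ENNReal.tendsto_toReal (measure_ne_top μ _)).comp ht

lemma Fc_tendsto_of_ramp_tendsto (μ : Measure ℝ) (μn : ℕ → Measure ℝ) [IsProbabilityMeasure μ]
    (hn : ∀ n, IsProbabilityMeasure (μn n))
    (hconv : ∀ a δ : ℝ, 0 < δ →
      Tendsto (fun n => ∫ t, ramp a δ t ∂(μn n)) atTop (𝓝 (∫ t, ramp a δ t ∂μ)))
    {x : ℝ} (hx : μ {x} = 0) :
    Tendsto (fun n => Fc (μn n) x) atTop (𝓝 (Fc μ x)) := by
  rw [Metric.tendsto_atTop]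
  intro ε hε
  have h1 := tendsto_Fc_right μ x
  have h2 := tendsto_Fc_left μ hx
  have e1 : ∀ᶠ k : ℕ in atTop, Fc μ (x + 1/((k:ℝ)+1)) < Fc μ x + ε/2 :=
    h1.eventually_lt_const (by linarith)
  have e2 : ∀ᶠ k : ℕ in atTop, Fc μ x - ε/2 < Fc μ (x - 1/((k:ℝ)+1)) :=
    h2.eventually_const_lt (by linarith)
  obtain ⟨k, hk1, hk2⟩ := (e1.and e2).exists
  set δ := 1/((k:ℝ)+1) with hδdef
  have hδ : 0 < δ := by positivity
  set c := δ/(1+δ) with hcdef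
  have hc : 0 < c := by positivity
  have hA := hconv x δ hδ
  have hB := hconv (x - δ) δ hδ
  rw [Metric.tendsto_atTop] at hA hB
  obtain ⟨N1, hN1⟩ := hA (c*ε/2) (by positivity)
  obtain ⟨N2, hN2⟩ := hB (c*ε/2) (by positivity)
  refine ⟨max N1 N2, fun n hn' => ?_⟩
  haveI := hn n
  have hub := (ramp_integral_bounds (μn n) (a := x) hδ).2
  have hlbμ := (ramp_integral_bounds μ (a := x) hδ).1
  have hlb := (ramp_integral_bounds (μn n) (a := x - δ) hδ).1
  have hubμ := (ramp_integral_bounds μ (a := x - δ) hδ).2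
  rw [show x - δ + δ = x by ring] at hlb
  have hd1 := hN1 n (le_trans (le_max_left _ _) hn')
  have hd2 := hN2 n (le_trans (le_max_right _ _) hn')
  rw [Real.dist_eq] at hd1 hd2
  have hd1' := (abs_lt.mp hd1).1
  have hd2' := (abs_lt.mp hd2).2
  -- upper: c(1 - Fc μn x) ≥ ∫ramp x δ dμn > ∫ramp x δ dμ - cε/2 ≥ c(1 - Fcμ(x+δ)) - cε/2
  have hup : Fc (μn n) x < Fc μ x + ε := by
    have key : c * (1 - Fc μ (x+δ) - ε/2) < c * (1 - Fc (μn n) x) := by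
      have : c * (1 - Fc μ (x+δ) - ε/2) = c * (1 - Fc μ (x+δ)) - c*ε/2 := by ring
      rw [this]
      linarith
    have := le_of_mul_le_mul_left key.le hc
    linarith
  have hdown : Fc μ x - ε < Fc (μn n) x := by
    have key : c * (1 - Fc (μn n) x) < c * (1 - Fc μ (x-δ) + ε/2) := by
      have : c * (1 - Fc μ (x-δ) + ε/2) = c * (1 - Fc μ (x-δ)) + c*ε/2 := by ring
      rw [this]
      linarith
    have := le_of_mul_le_mul_left key.le hc
    linarith
  rw [Real.dist_eq, abs_lt]
  constructor <;> linarith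

lemma countable_atoms (μ : Measure ℝ) [IsFiniteMeasure μ] :
    Set.Countable {x : ℝ | μ {x} ≠ 0} := by
  have h := MeasureTheory.Measure.countable_meas_level_set_pos (μ := μ)
    (g := fun x : ℝ => x) measurable_id
  refine Set.Countable.mono ?_ h
  intro x hx
  simp only [Set.mem_setOf_eq] at hx ⊢
  rw [show {y : ℝ | y = x} = {x} from Set.setOf_eq_eq_singleton]
  exact pos_iff_ne_zero.2 hx

lemma exists_nonatom (μ : Measure ℝ) [IsFiniteMeasure μ] {u v : ℝ} (huv : u < v) :
    ∃ y, y ∈ Set.Ioo u v ∧ μ {y} = 0 := by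
  by_contra h
  push_neg at h
  have hsub : Set.Ioo u v ⊆ {x : ℝ | μ {x} ≠ 0} := fun y hy => h y hy
  have h1 : (volume : Measure ℝ) (Set.Ioo u v) = 0 :=
    measure_mono_null hsub ((countable_atoms μ).measure_zero _)
  rw [Real.volume_Ioo] at h1
  rw [ENNReal.ofReal_eq_zero] at h1
  linarith

lemma exists_grid (μ : Measure ℝ) [IsFiniteMeasure μ] {a b θ : ℝ} (hab : a < b) (hθ : 0 < θ) :
    ∃ (m : ℕ) (y : ℕ → ℝ), (∀ i < m, y i ≤ y (i+1)) ∧ (∀ i ≤ m, μ {y i} = 0) ∧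
      (∀ i < m, y (i+1) - y i ≤ θ) ∧ a < y 0 ∧ y 0 ≤ a + θ ∧ b < y m ∧ y m ≤ b + θ := by
  set m : ℕ := max 1 ⌈2*(b-a)/θ⌉₊ with hm
  have hm1 : 1 ≤ m := le_max_left _ _
  have hm0 : (0:ℝ) < m := by exact_mod_cast Nat.lt_of_lt_of_le Nat.zero_lt_one hm1
  set s : ℝ := (b-a)/m with hs
  have hs0 : 0 < s := div_pos (by linarith) hm0
  have h2s : 2*s ≤ θ := by
    have hle : 2*(b-a)/θ ≤ (m:ℝ) := le_trans (Nat.le_ceil _) (by exact_mod_cast le_max_right _ _)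
    rw [div_le_iff₀ hθ] at hle
    have hsm : s * (m:ℝ) = b - a := by rw [hs]; field_simp
    nlinarith
  set z : ℕ → ℝ := fun i => a + i*s with hz
  have hex : ∀ i : ℕ, ∃ y, y ∈ Set.Ioo (z i) (z i + s) ∧ μ {y} = 0 :=
    fun i => exists_nonatom μ (by linarith)
  choose y hy1 hy2 using hex
  have hzsucc : ∀ i : ℕ, z i + s = z (i+1) := by
    intro i; simp only [hz]; push_cast; ring
  have hmono : ∀ i, y i ≤ y (i+1) := by
    intro i
    have h1 := (hy1 i).2
    have h2 := (hy1 (i+1)).1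
    rw [hzsucc i] at h1
    linarith
  have hmesh : ∀ i, y (i+1) - y i ≤ θ := by
    intro i
    have h1 := (hy1 i).1
    have h2 := (hy1 (i+1)).2
    have h3 : z (i+1) + s = z i + 2*s := by rw [← hzsucc i]; ring
    rw [h3] at h2
    linarith
  have hzm : z m = b := by
    simp only [hz, hs]
    field_simp
    ring
  refine ⟨m, y, fun i _ => hmono i, fun i _ => hy2 i, fun i _ => hmesh i, ?_, ?_, ?_, ?_⟩
  · have := (hy1 0).1
    simpa [hz] using this
  · have := (hy1 0).2
    have hz0 : z 0 = a := by simp [hz]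
    rw [hz0] at this
    linarith
  · have := (hy1 m).1
    rwa [hzm] at this
  · have := (hy1 m).2
    rw [hzm] at this
    linarith

end D1Aux

namespace D1Aux

lemma tails (μ : Measure ℝ) [IsProbabilityMeasure μ] {ε : ℝ} (hε : 0 < ε) :
    ∃ a b : ℝ, a < b ∧ Fc μ (a+1) < ε ∧ 1 - Fc μ b < ε := by
  have hleft : Tendsto (fun n : ℕ => Fc μ (-(n:ℝ))) atTop (𝓝 0) := by
    have hset : ⋂ n : ℕ, Set.Iic (-(n:ℝ)) = (∅ : Set ℝ) := by
      ext z; simp only [Set.mem_iInter, Set.mem_Iic, Set.mem_empty_iff_false, iff_false]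
      push_neg
      obtain ⟨n, hn⟩ := exists_nat_gt (-z)
      exact ⟨n, by linarith⟩
    have hmono : Antitone fun n : ℕ => Set.Iic (-(n:ℝ)) := by
      intro p q hpq
      apply Set.Iic_subset_Iic.2
      have : (p:ℝ) ≤ q := Nat.cast_le.2 hpq
      linarith
    have ht := tendsto_measure_iInter_atTop (μ := μ)
      (fun n => measurableSet_Iic.nullMeasurableSet) hmono ⟨0, measure_ne_top _ _⟩
    rw [hset, measure_empty] at ht
    have := (ENNReal.tendsto_toReal (by simp : (0:ℝ≥0∞) ≠ ⊤)).comp ht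
    simpa [Fc, Function.comp_def] using this
  have hright : Tendsto (fun n : ℕ => Fc μ (n:ℝ)) atTop (𝓝 1) := by
    have ht := (tendsto_measure_Iic_atTop μ).comp (tendsto_natCast_atTop_atTop (R := ℝ))
    rw [measure_univ] at ht
    have := (ENNReal.tendsto_toReal (by simp : (1:ℝ≥0∞) ≠ ⊤)).comp ht
    simpa [Fc, Function.comp_def] using this
  obtain ⟨n₁, hn₁⟩ := (hleft.eventually_lt_const hε).exists
  obtain ⟨n₂, hn₂⟩ := (hright.eventually_const_lt (by linarith : 1 - ε < 1)).exists
  refine ⟨-(n₁:ℝ) - 1, max (n₂:ℝ) (-(n₁:ℝ)), by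
    have : (0:ℝ) ≤ n₂ := Nat.cast_nonneg _
    have h2 := le_max_left (n₂:ℝ) (-(n₁:ℝ))
    linarith, ?_, ?_⟩
  · have : -(n₁:ℝ) - 1 + 1 = -(n₁:ℝ) := by ring
    rw [this]
    exact hn₁
  · have hmle : Fc μ (n₂:ℝ) ≤ Fc μ (max (n₂:ℝ) (-(n₁:ℝ))) := Fc_mono μ (le_max_left _ _)
    linarith

lemma core (μ : Measure ℝ) (μn : ℕ → Measure ℝ) [IsProbabilityMeasure μ]
    (hn : ∀ n, IsProbabilityMeasure (μn n))
    (hcdf : ∀ x, μ {x} = 0 → Tendsto (fun n => Fc (μn n) x) atTop (𝓝 (Fc μ x)))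
    {ε θ a b : ℝ} (hε : 0 < ε) (hθ : 0 < θ) (hθ1 : θ ≤ 1) (hab : a < b)
    (hta : Fc μ (a+1) < ε) (htb : 1 - Fc μ b < ε) :
    ∃ (m : ℕ) (y : ℕ → ℝ) (N : ℕ), (∀ i < m, y i ≤ y (i+1)) ∧ (∀ i < m, y (i+1) - y i ≤ θ) ∧
      (∀ i ≤ m, a < y i ∧ y i ≤ b + 1) ∧
      ∀ n ≥ N, Fc (μn n) (y 0) < 2*ε ∧ Fc μ (y 0) < ε ∧
        1 - Fc (μn n) (y m) < 2*ε ∧ 1 - Fc μ (y m) < ε ∧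
        (∑ i ∈ Finset.range (m+1), |Fc (μn n) (y i) - Fc μ (y i)|) < ε := by
  obtain ⟨m, y, hmono, hatom, hmesh, hy0a, hy0a', hymb, hymb'⟩ := exists_grid μ hab hθ
  have hmono' : ∀ i j, i ≤ j → j ≤ m → y i ≤ y j := by
    intro i j hij hjm
    induction j with
    | zero =>
      have : i = 0 := Nat.le_zero.mp hij
      rw [this]
    | succ j ih =>
      rcases Nat.lt_or_ge i (j+1) with h|h
      · have hij' : i ≤ j := Nat.lt_succ_iff.mp h
        exact le_trans (ih hij' (le_trans (Nat.le_succ j) hjm))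
          (hmono j (Nat.lt_of_lt_of_le (Nat.lt_succ_self j) hjm))
      · have : i = j+1 := le_antisymm hij h
        rw [this]
  have hmem : ∀ i ≤ m, a < y i ∧ y i ≤ b + 1 := by
    intro i hi
    constructor
    · exact lt_of_lt_of_le hy0a (hmono' 0 i (Nat.zero_le i) hi)
    · exact le_trans (hmono' i m hi le_rfl) (by linarith)
  have hFμy0 : Fc μ (y 0) < ε :=
    lt_of_le_of_lt (Fc_mono μ (by linarith : y 0 ≤ a + 1)) hta
  have hFμym : 1 - Fc μ (y m) < ε := by
    have := Fc_mono μ (le_of_lt hymb)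
    linarith
  have ev1 : ∀ᶠ n in atTop, Fc (μn n) (y 0) < 2*ε :=
    (hcdf (y 0) (hatom 0 (Nat.zero_le m))).eventually_lt_const (by linarith)
  have ev2 : ∀ᶠ n in atTop, 1 - 2*ε < Fc (μn n) (y m) :=
    (hcdf (y m) (hatom m le_rfl)).eventually_const_lt (by linarith)
  have ev3 : ∀ᶠ n in atTop,
      (∑ i ∈ Finset.range (m+1), |Fc (μn n) (y i) - Fc μ (y i)|) < ε := by
    have hterm : ∀ i ∈ Finset.range (m+1),
        Tendsto (fun n => |Fc (μn n) (y i) - Fc μ (y i)|) atTop (𝓝 0) := by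
      intro i hi
      have := ((hcdf (y i) (hatom i (Nat.lt_succ_iff.mp (Finset.mem_range.mp hi)))).sub
        (tendsto_const_nhds (x := Fc μ (y i)))).abs
      simpa using this
    have hsum := tendsto_finset_sum (Finset.range (m+1)) hterm
    simp only [Finset.sum_const_zero] at hsum
    exact hsum.eventually_lt_const hε
  obtain ⟨N, hN⟩ := eventually_atTop.mp ((ev1.and ev2).and ev3)
  refine ⟨m, y, N, hmono, hmesh, hmem, fun n hn' => ?_⟩
  obtain ⟨⟨g1, g2⟩, g3⟩ := hN n hn'
  exact ⟨g1, hFμy0, by linarith, hFμym, g3⟩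

lemma weak_of_cdf (μ : Measure ℝ) (μn : ℕ → Measure ℝ) [IsProbabilityMeasure μ]
    (hn : ∀ n, IsProbabilityMeasure (μn n))
    (hcdf : ∀ x, μ {x} = 0 → Tendsto (fun n => Fc (μn n) x) atTop (𝓝 (Fc μ x))) :
    ∀ f : ℝ →ᵇ ℝ, Tendsto (fun n => ∫ t, f t ∂(μn n)) atTop (𝓝 (∫ t, f t ∂μ)) := by
  intro f
  rw [Metric.tendsto_atTop]
  intro ε₀ hε₀
  set C : ℝ := max ‖f‖ 1 with hCdef
  have hC1 : (1:ℝ) ≤ C := le_max_right _ _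
  have hC0 : (0:ℝ) < C := lt_of_lt_of_le one_pos hC1
  have hfb : ∀ t, |f t| ≤ C := fun t => by
    rw [← Real.norm_eq_abs]
    exact (f.norm_coe_le_norm t).trans (le_max_left _ _)
  set ε : ℝ := ε₀/(16*C) with hεdef
  have hε : 0 < ε := by positivity
  set η : ℝ := ε₀/8 with hηdef
  have hη : 0 < η := by positivity
  obtain ⟨a, b, hab, hta, htb⟩ := tails μ hε
  have hucont : UniformContinuousOn f (Set.Icc a (b+1)) :=
    isCompact_Icc.uniformContinuousOn_of_continuous f.continuous.continuousOn
  rw [Metric.uniformContinuousOn_iff] at hucont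
  obtain ⟨θ₀, hθ₀, hmod⟩ := hucont η hη
  set θ : ℝ := min (θ₀/2) 1 with hθdef
  have hθ : 0 < θ := lt_min (by linarith) one_pos
  have hθ1 : θ ≤ 1 := min_le_right _ _
  obtain ⟨m, y, N, hmono, hmesh, hmem, hbnd⟩ := core μ μn hn hcdf hε hθ hθ1 hab hta htb
  refine ⟨N, fun n hn' => ?_⟩
  haveI := hn n
  have hosc : ∀ i < m, ∀ x ∈ Set.Ioc (y i) (y (i+1)), |f x - f (y (i+1))| ≤ η := by
    intro i hi x hx
    have hyi := hmem i (le_of_lt hi)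
    have hyi1 := hmem (i+1) hi
    have hxK : x ∈ Set.Icc a (b+1) := ⟨(hyi.1.trans hx.1).le, hx.2.trans hyi1.2⟩
    have hyK : y (i+1) ∈ Set.Icc a (b+1) := ⟨hyi1.1.le, hyi1.2⟩
    have hdist : dist x (y (i+1)) < θ₀ := by
      rw [Real.dist_eq, abs_of_nonpos (by linarith [hx.2] : x - y (i+1) ≤ 0)]
      have := hmesh i hi
      have h1 : θ ≤ θ₀/2 := min_le_left _ _
      have := hx.1
      linarith
    exact le_of_lt (by
      have := hmod x hxK (y (i+1)) hyK hdist
      rwa [Real.dist_eq] at this)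
  have est := grid_estimate μ (μn n) f.continuous hC0.le hfb hη.le hmono hosc
  obtain ⟨g1, g2, g3, g4, g5⟩ := hbnd n hn'
  rw [Real.dist_eq]
  have hCε : C * ε = ε₀/16 := by
    rw [hεdef]
    field_simp
  have b1 : Fc (μn n) (y 0) + Fc μ (y 0) + (1 - Fc (μn n) (y m)) + (1 - Fc μ (y m)) ≤ 6*ε := by
    linarith
  have b2 : C * (Fc (μn n) (y 0) + Fc μ (y 0) + (1 - Fc (μn n) (y m)) + (1 - Fc μ (y m)))
      ≤ C * (6*ε) := mul_le_mul_of_nonneg_left b1 hC0.le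
  have b3 : 2 * C * (∑ i ∈ Finset.range (m+1), |Fc (μn n) (y i) - Fc μ (y i)|)
      ≤ 2 * C * ε := mul_le_mul_of_nonneg_left g5.le (by positivity)
  have hfin : C * (6*ε) = 6 * (ε₀/16) := by rw [show C * (6*ε) = 6*(C*ε) by ring, hCε]
  have hfin2 : 2 * C * ε = 2 * (ε₀/16) := by rw [show 2*C*ε = 2*(C*ε) by ring, hCε]
  calc |(∫ t, f t ∂(μn n)) - ∫ t, f t ∂μ| ≤ _ := est
    _ ≤ C * (6*ε) + 2*η + 2*C*ε := by linarith
    _ = 6*(ε₀/16) + 2*(ε₀/8) + 2*(ε₀/16) := by rw [hfin, hfin2]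
    _ < ε₀ := by linarith

end D1Aux

namespace D1Aux

lemma d1_tendsto_of_cdf (μ : Measure ℝ) (μn : ℕ → Measure ℝ) [IsProbabilityMeasure μ]
    (hn : ∀ n, IsProbabilityMeasure (μn n))
    (hcdf : ∀ x, μ {x} = 0 → Tendsto (fun n => Fc (μn n) x) atTop (𝓝 (Fc μ x))) :
    Tendsto (fun n => d1 (μn n) μ) atTop (𝓝 0) := by
  rw [Metric.tendsto_atTop]
  intro ε₀ hε₀
  set ε : ℝ := ε₀/16 with hεdef
  have hε : 0 < ε := by positivity
  set η : ℝ := ε₀/8 with hηdef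
  have hη : 0 < η := by positivity
  set θ : ℝ := min η 1 with hθdef
  have hθ : 0 < θ := lt_min hη one_pos
  have hθ1 : θ ≤ 1 := min_le_right _ _
  obtain ⟨a, b, hab, hta, htb⟩ := tails μ hε
  obtain ⟨m, y, N, hmono, hmesh, hmem, hbnd⟩ := core μ μn hn hcdf hε hθ hθ1 hab hta htb
  refine ⟨N, fun n hn' => ?_⟩
  haveI := hn n
  obtain ⟨g1, g2, g3, g4, g5⟩ := hbnd n hn'
  rw [Real.dist_eq, sub_zero, abs_of_nonneg (d1_nonneg _ _)]
  have hbound : ∀ r ∈ {r : ℝ | ∃ f : ℝ → ℝ, Monotone f ∧ LipNormLEOne f ∧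
      r = |(∫ t, f t ∂(μn n)) - ∫ t, f t ∂μ|}, r ≤ 3*ε₀/4 := by
    rintro r ⟨g, hgmono, hglip, rfl⟩
    obtain ⟨K, M, hK, hM, hKM, hlip, hb⟩ := hglip
    have hosc : ∀ i < m, ∀ x ∈ Set.Ioc (y i) (y (i+1)), |g x - g (y (i+1))| ≤ η := by
      intro i hi x hx
      have hd := hlip.dist_le_mul x (y (i+1))
      rw [Real.dist_eq, Real.dist_eq, Real.coe_toNNReal K hK] at hd
      have hxabs : |x - y (i+1)| ≤ θ := by
        rw [abs_of_nonpos (by linarith [hx.2] : x - y (i+1) ≤ 0)]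
        have h1 := hmesh i hi
        have h2 := hx.1
        linarith
      have hK1 : K ≤ 1 := by linarith
      calc |g x - g (y (i+1))| ≤ K * |x - y (i+1)| := hd
        _ ≤ 1 * θ := mul_le_mul hK1 hxabs (abs_nonneg _) zero_le_one
        _ ≤ η := by rw [one_mul]; exact min_le_left _ _
    have hglip' : LipNormLEOne g := ⟨K, M, hK, hM, hKM, hlip, hb⟩
    have est := grid_estimate μ (μn n) (lip_continuous hglip') (C := 1) zero_le_one
      (lip_bound hglip') hη.le hmono hosc
    have b3 : (∑ i ∈ Finset.range (m+1), |Fc (μn n) (y i) - Fc μ (y i)|) ≤ ε := g5.le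
    calc |(∫ t, g t ∂(μn n)) - ∫ t, g t ∂μ| ≤ _ := est
      _ ≤ 1 * (6*ε) + 2*η + 2*1*ε := by
          have : Fc (μn n) (y 0) + Fc μ (y 0) + (1 - Fc (μn n) (y m)) + (1 - Fc μ (y m))
              ≤ 6*ε := by linarith
          linarith
      _ = 3*ε₀/4 := by rw [hεdef, hηdef]; ring
  have hne : Set.Nonempty {r : ℝ | ∃ f : ℝ → ℝ, Monotone f ∧ LipNormLEOne f ∧
      r = |(∫ t, f t ∂(μn n)) - ∫ t, f t ∂μ|} :=
    ⟨_, fun _ => (0:ℝ), monotone_const, lipNormLEOne_zero, rfl⟩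
  have hd1 : d1 (μn n) μ ≤ 3*ε₀/4 := csSup_le hne hbound
  linarith

def rampBCF (a δ : ℝ) (hδ : 0 < δ) : ℝ →ᵇ ℝ :=
  BoundedContinuousFunction.ofNormedAddCommGroup (ramp a δ) (ramp_lipschitz hδ).continuous
    (δ/(1+δ)) (fun t => by
      rw [Real.norm_eq_abs, abs_of_nonneg (ramp_nonneg hδ t)]; exact ramp_le hδ t)

@[simp] lemma rampBCF_apply (a δ : ℝ) (hδ : 0 < δ) (t : ℝ) : rampBCF a δ hδ t = ramp a δ t := rfl

/-- part (ii) -/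
lemma part_two (μ : Measure ℝ) (μn : ℕ → Measure ℝ) [IsProbabilityMeasure μ]
    (hn : ∀ n, IsProbabilityMeasure (μn n))
    (hw : ∀ f : ℝ →ᵇ ℝ, Tendsto (fun n => ∫ t, f t ∂(μn n)) atTop (𝓝 (∫ t, f t ∂μ))) :
    Tendsto (fun n => d1 (μn n) μ) atTop (𝓝 0) := by
  apply d1_tendsto_of_cdf μ μn hn
  intro x hx
  apply Fc_tendsto_of_ramp_tendsto μ μn hn _ hx
  intro a δ hδ
  simpa using hw (rampBCF a δ hδ)

/-- part (i) -/
lemma part_one (μ : Measure ℝ) (μn : ℕ → Measure ℝ) [IsFiniteMeasure μ]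
    (hn : ∀ n, IsProbabilityMeasure (μn n))
    (hd : Tendsto (fun n => d1 (μn n) μ) atTop (𝓝 0)) :
    (∀ f : ℝ →ᵇ ℝ, Tendsto (fun n => ∫ t, f t ∂(μn n)) atTop (𝓝 (∫ t, f t ∂μ))) ∧
      IsProbabilityMeasure μ := by
  have hprob : IsProbabilityMeasure μ := by
    have hmem : ∀ n, |(∫ t, (fun _ => (1:ℝ)) t ∂(μn n)) - ∫ t, (fun _ => (1:ℝ)) t ∂μ|
        ≤ d1 (μn n) μ := by
      intro n
      haveI := hn n
      exact abs_le_d1 monotone_const lipNormLEOne_one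
    have hval : ∀ n, |(1:ℝ) - (μ Set.univ).toReal| ≤ d1 (μn n) μ := by
      intro n
      haveI := hn n
      have h1 : ∫ t, (fun _ => (1:ℝ)) t ∂(μn n) = 1 := by simp
      have h2 : ∫ t, (fun _ => (1:ℝ)) t ∂μ = (μ Set.univ).toReal := by simp; rfl
      have := hmem n
      rwa [h1, h2] at this
    have hzero : |(1:ℝ) - (μ Set.univ).toReal| ≤ 0 :=
      ge_of_tendsto hd (Eventually.of_forall hval)
    have : (μ Set.univ).toReal = 1 := by
      have := abs_nonneg ((1:ℝ) - (μ Set.univ).toReal)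
      have h0 : |(1:ℝ) - (μ Set.univ).toReal| = 0 := le_antisymm hzero this
      rw [abs_eq_zero] at h0
      linarith
    constructor
    rw [← ENNReal.ofReal_one, ← this, ENNReal.ofReal_toReal (measure_ne_top μ _)]
  haveI := hprob
  have hcdf : ∀ x, μ {x} = 0 → Tendsto (fun n => Fc (μn n) x) atTop (𝓝 (Fc μ x)) := by
    apply Fc_tendsto_of_ramp_tendsto μ μn hn
    intro a δ hδ
    have hsq : ∀ n, |(∫ t, ramp a δ t ∂(μn n)) - ∫ t, ramp a δ t ∂μ| ≤ d1 (μn n) μ := by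
      intro n
      haveI := hn n
      exact abs_le_d1 (ramp_mono hδ) (ramp_lipnorm hδ)
    have habs : Tendsto (fun n => |(∫ t, ramp a δ t ∂(μn n)) - ∫ t, ramp a δ t ∂μ|)
        atTop (𝓝 0) :=
      squeeze_zero (fun n => abs_nonneg _) hsq hd
    rw [tendsto_iff_dist_tendsto_zero]
    simpa [Real.dist_eq] using habs
  exact ⟨weak_of_cdf μ μn hn hcdf, hprob⟩

end D1Aux

namespace D1Aux

lemma le_add_eps {a b : ℝ} (h : ∀ ε > (0:ℝ), a ≤ b + ε) : a ≤ b := by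
  by_contra hc
  push_neg at hc
  have := h ((a-b)/2) (by linarith)
  linarith

lemma part_three (μn : ℕ → Measure ℝ) (hn : ∀ n, IsProbabilityMeasure (μn n))
    (hcauchy : ∀ ε > (0:ℝ), ∃ N : ℕ, ∀ m ≥ N, ∀ n ≥ N, d1 (μn m) (μn n) < ε) :
    ∃ μ : Measure ℝ, IsProbabilityMeasure μ ∧
      ∀ f : ℝ →ᵇ ℝ, Tendsto (fun n => ∫ t, f t ∂(μn n)) atTop (𝓝 (∫ t, f t ∂μ)) := by
  have hF0 : ∀ (n : ℕ) (x : ℝ), 0 ≤ Fc (μn n) x := fun n x => Fc_nonneg _ _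
  have hF1 : ∀ (n : ℕ) (x : ℝ), Fc (μn n) x ≤ 1 := fun n x => by
    haveI := hn n; exact Fc_le_one _ x
  set F : ℕ → ℝ → ℝ := fun n x => Fc (μn n) x with hFdef
  set G : ℝ → ℝ := fun x => limsup (fun n => F n x) atTop with hGdef
  have hbddle : ∀ x, IsBoundedUnder (· ≤ ·) atTop (fun n => F n x) :=
    fun x => isBoundedUnder_of ⟨1, fun n => hF1 n x⟩
  have hbddge : ∀ x, IsBoundedUnder (· ≥ ·) atTop (fun n => F n x) :=
    fun x => isBoundedUnder_of ⟨0, fun n => hF0 n x⟩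
  have hcoble : ∀ x, IsCoboundedUnder (· ≤ ·) atTop (fun n => F n x) :=
    fun x => (hbddge x).isCoboundedUnder_le
  have hcobge : ∀ x, IsCoboundedUnder (· ≥ ·) atTop (fun n => F n x) :=
    fun x => (hbddle x).isCoboundedUnder_ge
  have hG0 : ∀ x, 0 ≤ G x := fun x =>
    le_limsup_of_frequently_le (Frequently.of_forall (fun n => hF0 n x)) (hbddle x)
  have hG1 : ∀ x, G x ≤ 1 := fun x =>
    limsup_le_of_le (hcoble x) (Eventually.of_forall (fun n => hF1 n x))
  have hGmono : Monotone G := by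
    intro x x' hxx'
    apply limsup_le_limsup (Eventually.of_forall (fun n => ?_)) (hcoble x) (hbddle x')
    haveI := hn n
    exact Fc_mono _ hxx'
  have hkey : ∀ (a δ : ℝ), 0 < δ → ∀ ε' > (0:ℝ), ∃ N : ℕ, ∀ m ≥ N, ∀ n ≥ N,
      F m a ≤ F n (a+δ) + ((1+δ)/δ) * ε' := by
    intro a δ hδ ε' hε'
    obtain ⟨N, hN⟩ := hcauchy ε' hε'
    refine ⟨N, fun m hm n hn' => ?_⟩
    haveI := hn m; haveI := hn n
    have h1 := Fc_le_of_d1 (μn m) (μn n) (a := a) hδ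
    have h2 := hN m hm n hn'
    have h3 : ((1+δ)/δ) * d1 (μn m) (μn n) ≤ ((1+δ)/δ) * ε' :=
      mul_le_mul_of_nonneg_left h2.le (by positivity)
    linarith
  have hA : ∀ (a δ : ℝ), 0 < δ → G a ≤ liminf (fun n => F n (a+δ)) atTop := by
    intro a δ hδ
    apply le_add_eps
    intro c hc
    obtain ⟨N, hN⟩ := hkey a δ hδ (c*δ/(1+δ)) (by positivity)
    have hcoef : ((1+δ)/δ) * (c*δ/(1+δ)) = c := by field_simp
    have h1 : ∀ n ≥ N, G a - c ≤ F n (a+δ) := by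
      intro n hn'
      have h2 : limsup (fun m => F m a) atTop ≤ F n (a+δ) + c := by
        apply limsup_le_of_le (hcoble a)
        refine eventually_atTop.mpr ⟨N, fun m hm => ?_⟩
        have h4 := hN m hm n hn'
        rw [hcoef] at h4
        linarith
      have h5 : G a ≤ F n (a+δ) + c := h2
      linarith
    have h3 : G a - c ≤ liminf (fun n => F n (a+δ)) atTop :=
      le_liminf_of_le (hcobge (a+δ)) (eventually_atTop.mpr ⟨N, h1⟩)
    linarith
  have hGbot : Tendsto G atBot (𝓝 0) := by
    rw [Metric.tendsto_nhds]
    intro ε hε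
    obtain ⟨N, hN⟩ := hcauchy (ε/4) (by linarith)
    haveI := hn N
    obtain ⟨a, b, hab, hta, htb⟩ := tails (μn N) (show (0:ℝ) < ε/2 by linarith)
    have h1 : ∀ m ≥ N, F m a ≤ F N (a+1) + 2*(ε/4) := by
      intro m hm
      haveI := hn m
      have h2 := Fc_le_of_d1 (μn m) (μn N) (a := a) one_pos
      have h3 := hN m hm N le_rfl
      have he : ((1+1)/1 : ℝ) = 2 := by norm_num
      rw [he] at h2
      nlinarith
    have hGa : G a < ε := by
      have h2 : G a ≤ F N (a+1) + ε/2 := by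
        apply limsup_le_of_le (hcoble a)
        exact eventually_atTop.mpr ⟨N, fun m hm => by have := h1 m hm; linarith⟩
      have h4 : F N (a+1) < ε/2 := hta
      linarith
    rw [eventually_atBot]
    exact ⟨a, fun x hx => by
      rw [Real.dist_eq, sub_zero, abs_of_nonneg (hG0 x)]
      exact lt_of_le_of_lt (hGmono hx) hGa⟩
  have hGtop : Tendsto G atTop (𝓝 1) := by
    rw [Metric.tendsto_nhds]
    intro ε hε
    obtain ⟨N, hN⟩ := hcauchy (ε/8) (by linarith)
    haveI := hn N
    obtain ⟨a, b, hab, hta, htb⟩ := tails (μn N) (show (0:ℝ) < ε/4 by linarith)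
    have h1 : ∀ m ≥ N, F N b ≤ F m (b+1) + 2*(ε/8) := by
      intro m hm
      haveI := hn m
      have h2 := Fc_le_of_d1 (μn N) (μn m) (a := b) one_pos
      have h3 := hN N le_rfl m hm
      have he : ((1+1)/1 : ℝ) = 2 := by norm_num
      rw [he] at h2
      nlinarith
    have hGb : 1 - ε/2 ≤ G (b+1) := by
      apply le_limsup_of_frequently_le ?_ (hbddle (b+1))
      apply Eventually.frequently
      refine eventually_atTop.mpr ⟨N, fun m hm => ?_⟩
      have h5 := h1 m hm
      have h6 : 1 - Fc (μn N) b < ε/4 := htb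
      have h7 : F N b = Fc (μn N) b := rfl
      linarith
    rw [eventually_atTop]
    exact ⟨b+1, fun x hx => by
      rw [Real.dist_eq]
      have hle := hGmono hx
      have h8 := hG1 x
      rw [abs_lt]
      constructor <;> linarith⟩
  set SF := hGmono.stieltjesFunction with hSFdef
  have hSFeq : ∀ x, SF x = Function.rightLim G x := fun x => hGmono.stieltjesFunction_eq x
  have hSF_lb : ∀ x, G x ≤ SF x := fun x => by
    rw [hSFeq]; exact hGmono.le_rightLim le_rfl
  have hSF_ub : ∀ x, SF x ≤ G (x+1) := fun x => by
    rw [hSFeq]; exact hGmono.rightLim_le (lt_add_one x)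
  have hSFbot : Tendsto (fun x => SF x) atBot (𝓝 0) := by
    apply tendsto_of_tendsto_of_tendsto_of_le_of_le tendsto_const_nhds
      (hGbot.comp (tendsto_atBot_add_const_right atBot (1:ℝ) tendsto_id))
      (fun x => (hG0 x).trans (hSF_lb x)) hSF_ub
  have hSFtop : Tendsto (fun x => SF x) atTop (𝓝 1) := by
    apply tendsto_of_tendsto_of_tendsto_of_le_of_le hGtop tendsto_const_nhds hSF_lb
      (fun x => (hSF_ub x).trans (hG1 (x+1)))
  haveI hμprob : IsProbabilityMeasure SF.measure := SF.isProbabilityMeasure hSFbot hSFtop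
  have hFcμ : ∀ x, Fc SF.measure x = SF x := by
    intro x
    rw [Fc, SF.measure_Iic hSFbot x, sub_zero,
      ENNReal.toReal_ofReal ((hG0 x).trans (hSF_lb x))]
  refine ⟨SF.measure, hμprob, weak_of_cdf SF.measure μn hn ?_⟩
  intro x hx
  rw [hFcμ x]
  have hll : Function.leftLim (⇑SF) x = SF x := by
    have h1 := SF.measure_singleton x
    rw [hx] at h1
    have h2 : SF x - Function.leftLim (⇑SF) x ≤ 0 := by
      by_contra hcon
      push_neg at hcon
      rw [eq_comm, ENNReal.ofReal_eq_zero] at h1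
      linarith
    have h3 : Function.leftLim (⇑SF) x ≤ SF x := SF.mono.leftLim_le le_rfl
    linarith
  have hlimsup : limsup (fun n => F n x) atTop ≤ SF x := hSF_lb x
  have hliminf : SF x ≤ liminf (fun n => F n x) atTop := by
    have hy : ∀ y ∈ Set.Iio x, SF y ≤ liminf (fun n => F n x) atTop := by
      intro y hy'
      have hy2 : y < x := hy'
      have h1 : SF y ≤ G ((y+x)/2) := by
        rw [hSFeq]; exact hGmono.rightLim_le (by linarith)
      have h2 := hA ((y+x)/2) ((x-y)/2) (by linarith)
      rw [show (y+x)/2 + (x-y)/2 = x by ring] at h2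
      linarith
    have h3 : Function.leftLim (⇑SF) x ≤ liminf (fun n => F n x) atTop :=
      le_of_tendsto (SF.mono.tendsto_leftLim x) (eventually_nhdsWithin_of_forall hy)
    rw [hll] at h3
    exact h3
  exact tendsto_of_le_liminf_of_limsup_le hliminf hlimsup (hbddle x) (hbddge x)

end D1Aux


end D1AuxSection

/-- **Lemma 2.1**: the distance `d₁` is compatible with the weak topology on
probability measures on `ℝ`:
(i) if `d₁(μⁿ, μ) → 0` with `μⁿ` probability measures and `μ` a finite measure, then
`μⁿ → μ` weakly and `μ` is a probability measure;
(ii) if `μₙ → μ` weakly (all probability measures), then `d₁(μₙ, μ) → 0`;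
(iii) any `d₁`-Cauchy sequence of probability measures converges weakly. -/
theorem d1_compatible_with_weak_topology :
    (∀ (μ : Measure ℝ) (μn : ℕ → Measure ℝ), IsFiniteMeasure μ →
      (∀ n, IsProbabilityMeasure (μn n)) →
      Tendsto (fun n => d1 (μn n) μ) atTop (𝓝 0) →
      ((∀ f : ℝ →ᵇ ℝ, Tendsto (fun n => ∫ t, f t ∂(μn n)) atTop (𝓝 (∫ t, f t ∂μ))) ∧
        IsProbabilityMeasure μ)) ∧
    (∀ (μ : Measure ℝ) (μn : ℕ → Measure ℝ), IsProbabilityMeasure μ →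
      (∀ n, IsProbabilityMeasure (μn n)) →
      (∀ f : ℝ →ᵇ ℝ, Tendsto (fun n => ∫ t, f t ∂(μn n)) atTop (𝓝 (∫ t, f t ∂μ))) →
      Tendsto (fun n => d1 (μn n) μ) atTop (𝓝 0)) ∧
    (∀ μn : ℕ → Measure ℝ, (∀ n, IsProbabilityMeasure (μn n)) →
      (∀ ε > (0 : ℝ), ∃ N : ℕ, ∀ m ≥ N, ∀ n ≥ N, d1 (μn m) (μn n) < ε) →
      ∃ μ : Measure ℝ, IsProbabilityMeasure μ ∧
        ∀ f : ℝ →ᵇ ℝ, Tendsto (fun n => ∫ t, f t ∂(μn n)) atTop (𝓝 (∫ t, f t ∂μ))) := by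
  refine ⟨?_, ?_, ?_⟩
  · intro μ μn hfin hn hd
    haveI := hfin
    exact D1Aux.part_one μ μn hn hd
  · intro μ μn hμ hn hw
    haveI := hμ
    exact D1Aux.part_two μ μn hn hw
  · intro μn hn hc
    exact D1Aux.part_three μn hn hc
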